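/- For every n ≥ 0 and all subsets I, J ⊆ [n] with I ∪ J ≠ [n], the entry A'_n(I, J) of the matrix A'_n = U_n A_n V_n equals 0. -/

import Mathlib

open Finset Polynomial
open scoped Classical

namespace AR

/-- `binVal I = r_n(I) - 1 = Σ_{i ∈ I} 2^(i-1)`. -/
def binVal (I : Finset ℕ) : ℕ := ∑ i ∈ I, 2 ^ (i - 1)

lemma binVal_Icc (m : ℕ) : binVal (Finset.Icc 1 m) = 2 ^ m - 1 := by
  induction m with
  | zero => simp [binVal]
  | succ k ih =>
      rw [binVal, Finset.sum_Icc_succ_top (by omega)]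
      rw [binVal] at ih
      rw [ih]
      have h1 : 1 ≤ 2 ^ k := Nat.one_le_two_pow
      simp only [Nat.add_sub_cancel, pow_succ]
      omega

lemma binVal_lt {n : ℕ} {I : Finset ℕ} (h : I ⊆ Finset.Icc 1 n) : binVal I < 2 ^ n := by
  have h1 : binVal I ≤ binVal (Finset.Icc 1 n) :=
    Finset.sum_le_sum_of_subset h
  have h2 := binVal_Icc n
  have h3 : 1 ≤ 2 ^ n := Nat.one_le_two_pow
  omega

/-- The row/column index (zero-based, i.e. `r_n(I) - 1`) corresponding to a subset `I ⊆ [n]`. -/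
def idx (n : ℕ) (I : Finset ℕ) (h : I ⊆ Finset.Icc 1 n) : Fin (2 ^ n) :=
  ⟨binVal I, binVal_lt h⟩

def blockEquiv (n : ℕ) : Fin (2 ^ n) ⊕ Fin (2 ^ n) ≃ Fin (2 ^ (n + 1)) :=
  finSumFinEquiv.trans (finCongr (by rw [pow_succ, mul_two]))

/-- The pair of Adin–Roichman matrices `(A_n, B_n)`, defined recursively. -/
def ABpair : (n : ℕ) → Matrix (Fin (2 ^ n)) (Fin (2 ^ n)) ℤ × Matrix (Fin (2 ^ n)) (Fin (2 ^ n)) ℤ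
  | 0 => (Matrix.of fun _ _ => 1, Matrix.of fun _ _ => 1)
  | n + 1 =>
      let p := ABpair n
      ((Matrix.reindex (blockEquiv n) (blockEquiv n)) (Matrix.fromBlocks p.1 p.1 p.1 (-p.2)),
       (Matrix.reindex (blockEquiv n) (blockEquiv n)) (Matrix.fromBlocks p.1 p.1 0 (-p.2)))

def A (n : ℕ) : Matrix (Fin (2 ^ n)) (Fin (2 ^ n)) ℤ := (ABpair n).1

def B (n : ℕ) : Matrix (Fin (2 ^ n)) (Fin (2 ^ n)) ℤ := (ABpair n).2

/-- `R` is a (nonempty) integer interval. -/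
def IsInterval (R : Finset ℕ) : Prop := ∃ a b : ℕ, R = Finset.Icc a b

/-- `R` is a run of `I`: a maximal nonempty interval contained in `I`. -/
def IsRun (I R : Finset ℕ) : Prop :=
  R.Nonempty ∧ IsInterval R ∧ R ⊆ I ∧
    ∀ S : Finset ℕ, IsInterval S → S ⊆ I → R ⊆ S → S = R

/-- `R` is a prefix of `S` : `min R = min S` and `R ⊆ S`. -/
def IsPrefixOf (R S : Finset ℕ) : Prop := R.min = S.min ∧ R ⊆ S

/-- `I ≫ J` : every run of `I ∩ J` is a prefix of a run of `I`. -/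
def Gg (I J : Finset ℕ) : Prop :=
  ∀ R : Finset ℕ, IsRun (I ∩ J) R → ∃ S : Finset ℕ, IsRun I S ∧ IsPrefixOf R S

/-- The set of runs of `I`. -/
noncomputable def runs (I : Finset ℕ) : Finset (Finset ℕ) :=
  I.powerset.filter (fun R => IsRun I R)

/-- `π(I)`: the product of (size + 1) over the runs of `I`. -/
noncomputable def piFun (I : Finset ℕ) : ℕ := ∏ R ∈ runs I, (R.card + 1)

/-- `π'_n(I)`: the product of (size + 1) over the runs of `I` not containing `n`. -/
noncomputable def piFun' (n : ℕ) (I : Finset ℕ) : ℕ :=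
  ∏ R ∈ (runs I).filter (fun R => n ∉ R), (R.card + 1)

/-- The subset of `[n]` encoded by a zero-based index `i : Fin (2^n)` (binary digits). -/
def decode (n : ℕ) (i : Fin (2 ^ n)) : Finset ℕ :=
  (Finset.Icc 1 n).filter (fun k => Nat.testBit i.val (k - 1))

/-- The matrix `U_n`, with `U_n(I,J) = 1` if `I ⊇ J` and `0` otherwise. -/
def U (n : ℕ) : Matrix (Fin (2 ^ n)) (Fin (2 ^ n)) ℤ :=
  Matrix.of fun i j => if decode n j ⊆ decode n i then 1 else 0

/-- The matrix `V_n = U_n⁻¹`, with `V_n(I,J) = (-1)^{|I \ J|}` if `I ⊇ J` and `0` otherwise. -/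
def V (n : ℕ) : Matrix (Fin (2 ^ n)) (Fin (2 ^ n)) ℤ :=
  Matrix.of fun i j =>
    if decode n j ⊆ decode n i then (-1) ^ ((decode n i) \ (decode n j)).card else 0

def A' (n : ℕ) : Matrix (Fin (2 ^ n)) (Fin (2 ^ n)) ℤ := U n * A n * V n

def B' (n : ℕ) : Matrix (Fin (2 ^ n)) (Fin (2 ^ n)) ℤ := U n * B n * V n

/-- `E ⪯ I` : `E ⊆ I`, `E` contains no minimal element of a run of `I`,
and `E` contains no two consecutive integers. -/
def SubPrec (E I : Finset ℕ) : Prop :=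
  E ⊆ I ∧ (∀ R : Finset ℕ, (h : IsRun I R) → R.min' h.1 ∉ E) ∧
    ∀ i : ℕ, ¬ (i ∈ E ∧ i + 1 ∈ E)

/-- `I ⇝ J` : `J = ([n] \ I) ∪ E` for some `E ⪯ I`. -/
def Step (n : ℕ) (I J : Finset ℕ) : Prop :=
  ∃ E : Finset ℕ, SubPrec E I ∧ J = (Finset.Icc 1 n \ I) ∪ E

/-- `π_μ` for a composition `μ` of `n`. -/
def piComp {n : ℕ} (μ : Composition n) : ℕ := (μ.blocks.map (· + 1)).prod

/-- `π'_μ` for a composition `μ` of `n`. -/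
def piComp' {n : ℕ} (μ : Composition n) : ℕ := (μ.blocks.dropLast.map (· + 1)).prod

/-- The Thue–Morse sequence: `thueMorse m = s₂(m) % 2`. -/
def thueMorse (m : ℕ) : ℕ := (Nat.digits 2 m).sum % 2


lemma decode_subset (n : ℕ) (i : Fin (2^n)) : decode n i ⊆ Finset.Icc 1 n :=
  Finset.filter_subset _ _

lemma not_mem_decode (n : ℕ) (i : Fin (2^n)) : n+1 ∉ decode n i := by
  intro h
  have := decode_subset n i h
  simp [Finset.mem_Icc] at this

lemma blockEquiv_inl (n : ℕ) (i : Fin (2^n)) : (blockEquiv n (Sum.inl i) : ℕ) = (i : ℕ) := rfl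

lemma blockEquiv_inr (n : ℕ) (i : Fin (2^n)) : (blockEquiv n (Sum.inr i) : ℕ) = 2^n + (i : ℕ) := rfl

lemma decode_inl (n : ℕ) (i : Fin (2^n)) :
    decode (n+1) (blockEquiv n (Sum.inl i)) = decode n i := by
  ext k
  simp only [decode, Finset.mem_filter, Finset.mem_Icc]
  simp only [blockEquiv_inl]
  constructor
  · rintro ⟨⟨h1, h2⟩, h3⟩
    refine ⟨⟨h1, ?_⟩, h3⟩
    rcases Nat.lt_or_ge (k-1) n with h | h
    · omega
    · exfalso
      have hi : (i:ℕ) < 2^(k-1) :=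
        lt_of_lt_of_le i.isLt (Nat.pow_le_pow_right (by norm_num) h)
      rw [Nat.testBit_lt_two_pow hi] at h3
      exact Bool.false_ne_true h3
  · rintro ⟨⟨h1, h2⟩, h3⟩
    exact ⟨⟨h1, by omega⟩, h3⟩

lemma testBit_two_pow_add'' {n i j : ℕ} (h : i < 2^n) :
    Nat.testBit (2^n + i) j = if j < n then Nat.testBit i j else decide (j = n) := by
  have h2 := Nat.testBit_two_pow_mul_add 1 h j
  rw [Nat.mul_one] at h2
  rw [h2]
  rcases lt_trichotomy j n with hj | hj | hj
  · simp [hj]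
  · simp [hj]
  · have h3 : ¬ (j < n) := by omega
    simp only [h3, if_false]
    have : Nat.testBit 1 (j - n) = false := by
      rw [show (1:ℕ) = 2^0 by norm_num, Nat.testBit_two_pow]
      simp; omega
    rw [this]
    simp; omega

lemma decode_inr (n : ℕ) (i : Fin (2^n)) :
    decode (n+1) (blockEquiv n (Sum.inr i)) = insert (n+1) (decode n i) := by
  ext k
  simp only [decode, Finset.mem_filter, Finset.mem_Icc, Finset.mem_insert]
  simp only [blockEquiv_inr]
  rw [testBit_two_pow_add'' i.isLt]
  by_cases hk : k - 1 < n
  · simp only [hk, if_true]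
    constructor
    · rintro ⟨⟨h1, h2⟩, h3⟩; exact Or.inr ⟨⟨h1, by omega⟩, h3⟩
    · rintro (h | ⟨⟨h1, h2⟩, h3⟩)
      · omega
      · exact ⟨⟨h1, by omega⟩, h3⟩
  · simp only [hk, if_false]
    constructor
    · rintro ⟨⟨h1, h2⟩, h3⟩
      simp at h3
      left; omega
    · rintro (h | ⟨⟨h1, h2⟩, h3⟩)
      · subst h; refine ⟨⟨by omega, le_refl _⟩, by simp⟩
      · omega

lemma subset_Icc_of_not_mem' {n : ℕ} {I : Finset ℕ} (h : I ⊆ Finset.Icc 1 (n+1)) (hn : n+1 ∉ I) :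
    I ⊆ Finset.Icc 1 n := by
  intro x hx
  have h1 := h hx
  have h2 : x ≠ n+1 := fun e => hn (e ▸ hx)
  simp [Finset.mem_Icc] at *
  omega

lemma erase_subset_Icc' {n : ℕ} {I : Finset ℕ} (h : I ⊆ Finset.Icc 1 (n+1)) :
    I.erase (n+1) ⊆ Finset.Icc 1 n := by
  intro x hx
  have h1 := h (Finset.mem_of_mem_erase hx)
  have h2 := Finset.ne_of_mem_erase hx
  simp [Finset.mem_Icc] at *
  omega

lemma idx_succ_not_mem {n : ℕ} {I : Finset ℕ} (h : I ⊆ Finset.Icc 1 (n+1)) (hn : n+1 ∉ I) :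
    idx (n+1) I h = blockEquiv n (Sum.inl (idx n I (subset_Icc_of_not_mem' h hn))) := by
  apply Fin.ext
  rw [blockEquiv_inl]
  rfl

lemma binVal_erase {n : ℕ} {I : Finset ℕ} (hn : n+1 ∈ I) :
    binVal I = 2^n + binVal (I.erase (n+1)) := by
  rw [binVal, ← Finset.add_sum_erase _ _ hn]
  simp [binVal]

lemma idx_succ_mem {n : ℕ} {I : Finset ℕ} (h : I ⊆ Finset.Icc 1 (n+1)) (hn : n+1 ∈ I) :
    idx (n+1) I h = blockEquiv n (Sum.inr (idx n (I.erase (n+1)) (erase_subset_Icc' h))) := by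
  apply Fin.ext
  rw [blockEquiv_inr]
  exact binVal_erase hn

lemma U_succ (n : ℕ) : U (n+1) = Matrix.reindex (blockEquiv n) (blockEquiv n)
    (Matrix.fromBlocks (U n) 0 (U n) (U n)) := by
  ext i j
  obtain ⟨x, rfl⟩ := (blockEquiv n).surjective i
  obtain ⟨y, rfl⟩ := (blockEquiv n).surjective j
  rw [Matrix.reindex_apply, Matrix.submatrix_apply, Equiv.symm_apply_apply, Equiv.symm_apply_apply]
  rcases x with x | x <;> rcases y with y | y
  · rw [Matrix.fromBlocks_apply₁₁]
    simp only [U, Matrix.of_apply, decode_inl]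
  · rw [Matrix.fromBlocks_apply₁₂]
    simp only [U, Matrix.of_apply, decode_inl, decode_inr]
    rw [if_neg]
    · rfl
    · intro hsub
      exact not_mem_decode n x (hsub (Finset.mem_insert_self _ _))
  · rw [Matrix.fromBlocks_apply₂₁]
    simp only [U, Matrix.of_apply, decode_inl, decode_inr]
    simp only [Finset.subset_insert_iff_of_notMem (not_mem_decode n y)]
  · rw [Matrix.fromBlocks_apply₂₂]
    simp only [U, Matrix.of_apply, decode_inr]
    simp only [Finset.insert_subset_insert_iff (not_mem_decode n y)]

lemma V_succ (n : ℕ) : V (n+1) = Matrix.reindex (blockEquiv n) (blockEquiv n)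
    (Matrix.fromBlocks (V n) 0 (-(V n)) (V n)) := by
  ext i j
  obtain ⟨x, rfl⟩ := (blockEquiv n).surjective i
  obtain ⟨y, rfl⟩ := (blockEquiv n).surjective j
  rw [Matrix.reindex_apply, Matrix.submatrix_apply, Equiv.symm_apply_apply, Equiv.symm_apply_apply]
  rcases x with x | x <;> rcases y with y | y
  · rw [Matrix.fromBlocks_apply₁₁]
    simp only [V, Matrix.of_apply, decode_inl]
  · rw [Matrix.fromBlocks_apply₁₂]
    simp only [V, Matrix.of_apply, decode_inl, decode_inr]
    rw [if_neg]
    · rfl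
    · intro hsub
      exact not_mem_decode n x (hsub (Finset.mem_insert_self _ _))
  · rw [Matrix.fromBlocks_apply₂₁]
    simp only [V, Matrix.of_apply, decode_inl, decode_inr, Matrix.neg_apply]
    simp only [Finset.subset_insert_iff_of_notMem (not_mem_decode n y)]
    by_cases hsub : decode n y ⊆ decode n x
    · rw [if_pos hsub, if_pos hsub]
      rw [Finset.insert_sdiff_of_notMem _ (fun h => not_mem_decode n y h)]
      rw [Finset.card_insert_of_notMem (fun h => not_mem_decode n x (Finset.mem_sdiff.mp h).1)]
      rw [pow_succ]
      ring
    · rw [if_neg hsub, if_neg hsub, neg_zero]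
  · rw [Matrix.fromBlocks_apply₂₂]
    simp only [V, Matrix.of_apply, decode_inr]
    simp only [Finset.insert_subset_insert_iff (not_mem_decode n y)]
    have hd : insert (n+1) (decode n x) \ insert (n+1) (decode n y) = decode n x \ decode n y := by
      ext a
      simp only [Finset.mem_sdiff, Finset.mem_insert, not_or]
      constructor
      · rintro ⟨h1 | h1, h2, h3⟩
        · exact absurd h1 h2
        · exact ⟨h1, h3⟩
      · rintro ⟨h1, h2⟩
        exact ⟨Or.inr h1, fun e => not_mem_decode n x (e ▸ h1), h2⟩
    rw [hd]

lemma ABV_blocks (n : ℕ) :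
    (Matrix.fromBlocks (U n) 0 (U n) (U n) * Matrix.fromBlocks (A n) (A n) (A n) (-(B n)))
        * Matrix.fromBlocks (V n) 0 (-(V n)) (V n)
      = Matrix.fromBlocks 0 (A' n) (A' n + B' n) (A' n - B' n) := by
  simp only [Matrix.fromBlocks_multiply, A', B', Matrix.zero_mul, Matrix.mul_zero,
    Matrix.mul_neg, Matrix.neg_mul, Matrix.add_mul, Matrix.mul_add, neg_neg, add_zero, zero_add,
    Matrix.mul_assoc]
  rw [Matrix.fromBlocks_inj]
  refine ⟨by abel, by abel, by abel, by abel⟩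

lemma BBV_blocks (n : ℕ) :
    (Matrix.fromBlocks (U n) 0 (U n) (U n) * Matrix.fromBlocks (A n) (A n) 0 (-(B n)))
        * Matrix.fromBlocks (V n) 0 (-(V n)) (V n)
      = Matrix.fromBlocks 0 (A' n) (B' n) (A' n - B' n) := by
  simp only [Matrix.fromBlocks_multiply, A', B', Matrix.zero_mul, Matrix.mul_zero,
    Matrix.mul_neg, Matrix.neg_mul, Matrix.add_mul, Matrix.mul_add, neg_neg, add_zero, zero_add,
    Matrix.mul_assoc]
  rw [Matrix.fromBlocks_inj]
  refine ⟨by abel, by abel, by abel, by abel⟩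

lemma A_succ_eq (n : ℕ) : A (n+1) = Matrix.reindex (blockEquiv n) (blockEquiv n)
    (Matrix.fromBlocks (A n) (A n) (A n) (-(B n))) := rfl

lemma B_succ_eq (n : ℕ) : B (n+1) = Matrix.reindex (blockEquiv n) (blockEquiv n)
    (Matrix.fromBlocks (A n) (A n) 0 (-(B n))) := rfl

lemma A'_succ (n : ℕ) : A' (n+1) = Matrix.reindex (blockEquiv n) (blockEquiv n)
    (Matrix.fromBlocks 0 (A' n) (A' n + B' n) (A' n - B' n)) := by
  rw [A', A_succ_eq, U_succ, V_succ, Matrix.reindex_apply, Matrix.reindex_apply,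
    Matrix.reindex_apply, Matrix.submatrix_mul_equiv, Matrix.submatrix_mul_equiv,
    ABV_blocks, ← Matrix.reindex_apply]

lemma B'_succ (n : ℕ) : B' (n+1) = Matrix.reindex (blockEquiv n) (blockEquiv n)
    (Matrix.fromBlocks 0 (A' n) (B' n) (A' n - B' n)) := by
  rw [B', B_succ_eq, U_succ, V_succ, Matrix.reindex_apply, Matrix.reindex_apply,
    Matrix.reindex_apply, Matrix.submatrix_mul_equiv, Matrix.submatrix_mul_equiv,
    BBV_blocks, ← Matrix.reindex_apply]

lemma reindex_entry {n : ℕ}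
    (M : Matrix (Fin (2^n) ⊕ Fin (2^n)) (Fin (2^n) ⊕ Fin (2^n)) ℤ)
    (x y : Fin (2^n) ⊕ Fin (2^n)) :
    (Matrix.reindex (blockEquiv n) (blockEquiv n) M) (blockEquiv n x) (blockEquiv n y) = M x y := by
  simp [Matrix.reindex_apply]

lemma Icc_succ_insert (n : ℕ) : Finset.Icc 1 (n+1) = insert (n+1) (Finset.Icc 1 n) := by
  ext a
  simp [Finset.mem_Icc]
  omega

lemma erase_union_ne {n : ℕ} {I J : Finset ℕ}
    (hIJ : I ∪ J ≠ Finset.Icc 1 (n+1)) (hmem : n+1 ∈ I ∪ J) :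
    I.erase (n+1) ∪ J.erase (n+1) ≠ Finset.Icc 1 n := by
  intro h
  apply hIJ
  have h2 : I ∪ J = insert (n+1) ((I ∪ J).erase (n+1)) := (Finset.insert_erase hmem).symm
  rw [h2, Finset.erase_union_distrib, h, Icc_succ_insert]

lemma main_zero {n : ℕ} (I J : Finset ℕ) (hI : I ⊆ Finset.Icc 1 n) (hJ : J ⊆ Finset.Icc 1 n)
    (hIJ : I ∪ J ≠ Finset.Icc 1 n) :
    A' n (idx n I hI) (idx n J hJ) = 0 ∧ B' n (idx n I hI) (idx n J hJ) = 0 := by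
  induction n generalizing I J with
  | zero =>
      exfalso
      apply hIJ
      have hIe : I = ∅ := Finset.subset_empty.mp (by simpa [Finset.Icc_eq_empty_of_lt] using hI)
      have hJe : J = ∅ := Finset.subset_empty.mp (by simpa [Finset.Icc_eq_empty_of_lt] using hJ)
      rw [hIe, hJe, Finset.empty_union]
      exact (Finset.Icc_eq_empty_of_lt (by norm_num)).symm
  | succ n ih =>
      rw [A'_succ, B'_succ]
      by_cases hnI : n+1 ∈ I <;> by_cases hnJ : n+1 ∈ J
      · -- both contain n+1
        rw [idx_succ_mem hI hnI, idx_succ_mem hJ hnJ, reindex_entry, reindex_entry,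
          Matrix.fromBlocks_apply₂₂, Matrix.fromBlocks_apply₂₂]
        have h' := erase_union_ne hIJ (Finset.mem_union_left _ hnI)
        have := ih _ _ (erase_subset_Icc' hI) (erase_subset_Icc' hJ) h'
        rw [Matrix.sub_apply, this.1, this.2]
        norm_num
      · -- n+1 ∈ I, n+1 ∉ J
        rw [idx_succ_mem hI hnI, idx_succ_not_mem hJ hnJ, reindex_entry, reindex_entry,
          Matrix.fromBlocks_apply₂₁, Matrix.fromBlocks_apply₂₁]
        have h' := erase_union_ne hIJ (Finset.mem_union_left _ hnI)
        rw [Finset.erase_eq_of_notMem hnJ] at h'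
        have := ih _ _ (erase_subset_Icc' hI) (subset_Icc_of_not_mem' hJ hnJ) h'
        rw [Matrix.add_apply, this.1, this.2]
        norm_num
      · -- n+1 ∉ I, n+1 ∈ J
        rw [idx_succ_not_mem hI hnI, idx_succ_mem hJ hnJ, reindex_entry, reindex_entry,
          Matrix.fromBlocks_apply₁₂, Matrix.fromBlocks_apply₁₂]
        have h' := erase_union_ne hIJ (Finset.mem_union_right _ hnJ)
        rw [Finset.erase_eq_of_notMem hnI] at h'
        have := ih _ _ (subset_Icc_of_not_mem' hI hnI) (erase_subset_Icc' hJ) h'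
        exact ⟨this.1, this.1⟩
      · -- neither
        rw [idx_succ_not_mem hI hnI, idx_succ_not_mem hJ hnJ, reindex_entry, reindex_entry,
          Matrix.fromBlocks_apply₁₁, Matrix.fromBlocks_apply₁₁]
        exact ⟨rfl, rfl⟩



theorem stmt6 (n : ℕ) (I J : Finset ℕ) (hI : I ⊆ Finset.Icc 1 n) (hJ : J ⊆ Finset.Icc 1 n)
    (hIJ : I ∪ J ≠ Finset.Icc 1 n) :
    A' n (idx n I hI) (idx n J hJ) = 0 := by
  exact (main_zero I J hI hJ hIJ).1

end AR
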